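/- arXiv:2412.08784 — 3 statements merged into one kernel-verified Lean document; each statement's English description precedes it below -/
import Mathlib

section
/- Let G be a group acting on a set X such that every orbit is infinite. Then for every pair of finite subsets A, B of X there exists g ∈ G with g(A) ∩ B = ∅. -/
open scoped Pointwise

/-- Neumann's lemma: if a group `G` acts on a set `X` with all orbits infinite,
then for any finite subsets `A, B ⊆ X` there is `g ∈ G` with `g • A ∩ B = ∅`. -/
theorem neumann_lemma {G X : Type*} [Group G] [MulAction G X]
    (horb : ∀ x : X, (MulAction.orbit G x).Infinite)
    (A B : Set X) (hA : A.Finite) (hB : B.Finite) :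
    ∃ g : G, ((fun x => g • x) '' A) ∩ B = ∅ := by
  classical
  by_contra h
  push_neg at h
  -- index the covering by pairs (a, b) ∈ A × B
  set s : Finset (X × X) := hA.toFinset ×ˢ hB.toFinset with hs
  set gp : X × X → G := fun p =>
    if hp : ∃ g : G, g • p.1 = p.2 then hp.choose else 1 with hgp
  have hcovers : ⋃ p ∈ s, gp p • ((MulAction.stabilizer G p.1 : Subgroup G) : Set G)
      = Set.univ := by
    ext g
    simp only [Set.mem_iUnion, Set.mem_univ, iff_true]
    obtain ⟨x, ⟨a, ha, rfl⟩, hb⟩ := h g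
    refine ⟨(a, g • a), ?_, ?_⟩
    · simp [hs, Set.Finite.mem_toFinset, ha, hb]
    · have hp : ∃ g' : G, g' • (a, g • a).1 = (a, g • a).2 := ⟨g, rfl⟩
      have hch : hp.choose • a = g • a := hp.choose_spec
      rw [mem_leftCoset_iff, SetLike.mem_coe, MulAction.mem_stabilizer_iff]
      simp only [hgp, dif_pos hp, mul_smul, inv_smul_eq_iff, hch]
  obtain ⟨p, -, hfi⟩ := Subgroup.exists_finiteIndex_of_leftCoset_cover hcovers
  have : Finite (G ⧸ MulAction.stabilizer G p.1) := @Subgroup.finite_quotient_of_finiteIndex _ _ _ hfi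
  have : (MulAction.orbit G p.1).Finite :=
    Set.finite_coe_iff.mp <| Finite.of_equiv _ (MulAction.orbitEquivQuotientStabilizer G p.1).symm
  exact horb p.1 this
end

section
/- Let G be a group acting by homeomorphisms on a compact metric space X. Assume: (1) there is a positive integer p such that for every ε > 0 there exist nonempty finite sets A, B ⊆ X of cardinality at most p and g ∈ G with g(X \ A^ε) ⊆ B^ε; and (2) the action of G has no finite orbits. Then there exist g₁, g₂ ∈ G and pairwise disjoint open sets U₁, U₂, V₁, V₂ ⊆ X with g₁(X \ U₁) ⊆ V₁ and g₂(X \ U₂) ⊆ V₂ (a ping-pong pair). -/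
open Metric
open scoped Pointwise

/-- B.H. Neumann-type lemma: if all orbits are infinite, then any finite set can be moved
completely off itself by some group element. -/
private lemma exists_smul_off {G X : Type*} [Group G] [MulAction G X]
    (horb : ∀ x : X, (MulAction.orbit G x).Infinite)
    (F : Set X) (hF : F.Finite) : ∃ h : G, ∀ x ∈ F, h • x ∉ F := by
  classical
  by_contra hcon
  push_neg at hcon
  set gg : X × X → G := fun q => if h : ∃ g : G, g • q.1 = q.2 then h.choose else 1 with hgg
  set H : X × X → Subgroup G := fun q => MulAction.stabilizer G q.1 with hH
  have hcovers : ⋃ i ∈ (hF.toFinset ×ˢ hF.toFinset), gg i • (H i : Set G) = Set.univ := by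
    apply Set.eq_univ_of_forall
    intro h
    obtain ⟨x, hx, hhx⟩ := hcon h
    apply Set.mem_biUnion (show (x, h • x) ∈ hF.toFinset ×ˢ hF.toFinset by
      simp [Finset.mem_product, hF.mem_toFinset, hx, hhx])
    have hex : ∃ g : G, g • (x, h • x).1 = (x, h • x).2 := ⟨h, rfl⟩
    have hchoice : gg (x, h • x) • x = h • x := by
      rw [hgg]; dsimp only; rw [dif_pos hex]; exact hex.choose_spec
    rw [mem_leftCoset_iff]
    show (gg (x, h • x))⁻¹ * h ∈ MulAction.stabilizer G x
    rw [MulAction.mem_stabilizer_iff, mul_smul, inv_smul_eq_iff]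
    exact hchoice.symm
  obtain ⟨q, _, hfin⟩ := Subgroup.exists_finiteIndex_of_leftCoset_cover hcovers
  have h1 : Finite (G ⧸ MulAction.stabilizer G q.1) :=
    @Subgroup.finite_quotient_of_finiteIndex _ _ _ hfin
  have h2 : Finite (MulAction.orbit G q.1) :=
    Finite.of_equiv _ (MulAction.orbitEquivQuotientStabilizer G q.1).symm
  exact horb q.1 (Set.toFinite _)

/-- Pad a nonempty finite set of cardinality at most `p` into the range of a map `Fin p → X`. -/
private lemma exists_range_eq {X : Type*} (p : ℕ) (A : Set X) (hA : A.Finite)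
    (hne : A.Nonempty) (hcard : A.ncard ≤ p) : ∃ a : Fin p → X, Set.range a = A := by
  classical
  obtain ⟨x0, hx0⟩ := hne
  have hcard' : hA.toFinset.card ≤ p := by rwa [Set.ncard_eq_toFinset_card A hA] at hcard
  refine ⟨fun i => if h : (i : ℕ) < hA.toFinset.card
    then (hA.toFinset.equivFin.symm ⟨i, h⟩ : X) else x0, ?_⟩
  apply subset_antisymm
  · rintro _ ⟨i, rfl⟩
    dsimp only
    split
    · exact hA.mem_toFinset.mp (hA.toFinset.equivFin.symm _).2
    · exact hx0
  · intro x hx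
    have hxs : x ∈ hA.toFinset := hA.mem_toFinset.mpr hx
    refine ⟨⟨hA.toFinset.equivFin ⟨x, hxs⟩,
      lt_of_lt_of_le (hA.toFinset.equivFin ⟨x, hxs⟩).2 hcard'⟩, ?_⟩
    dsimp only
    rw [dif_pos (hA.toFinset.equivFin ⟨x, hxs⟩).2]
    simp

/-- The ping-pong "disjointification" step: from a contracting pair `(A, B)` and
an element `h` with `h • A` disjoint from `B`, produce a contracting pair `(A, h • B)`. -/
private lemma step_two {G X : Type*} [Group G] [MetricSpace X] [MulAction G X]
    (hcont : ∀ g : G, Continuous fun x : X => g • x)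
    (A B : Set X) (hA : A.Finite) (hB : B.Finite) (h : G)
    (hdisj : ∀ x ∈ A, h • x ∉ B)
    (key : ∀ U V : Set X, IsOpen U → IsOpen V → A ⊆ U → B ⊆ V →
      ∃ g : G, (fun x => g • x) '' Uᶜ ⊆ V) :
    ∀ U V : Set X, IsOpen U → IsOpen V → A ⊆ U → (fun x => h • x) '' B ⊆ V →
      ∃ g : G, (fun x => g • x) '' Uᶜ ⊆ V := by
  intro U V hU hV hAU hBV
  set C : Set X := (fun x => h⁻¹ • x) '' B with hC
  have hCfin : C.Finite := hB.image _
  have hACdisj : Disjoint A C := by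
    rw [Set.disjoint_left]
    rintro x hxA ⟨b, hbB, rfl⟩
    exact hdisj _ hxA (by rwa [smul_inv_smul])
  obtain ⟨δ, hδpos, hδ⟩ := hACdisj.exists_thickenings hA.isCompact hCfin.isClosed
  set O₁ := thickening δ A with hO₁
  set O₂ := thickening δ C with hO₂
  set WA := U ∩ O₁ with hWAdef
  set WB := ((fun x => h • x) ⁻¹' V) ∩ ((fun x => h⁻¹ • x) ⁻¹' O₂) with hWBdef
  have hWAopen : IsOpen WA := hU.inter isOpen_thickening
  have hWBopen : IsOpen WB :=
    (hV.preimage (hcont h)).inter (isOpen_thickening.preimage (hcont h⁻¹))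
  have hAWA : A ⊆ WA := fun x hx => ⟨hAU hx, self_subset_thickening hδpos A hx⟩
  have hBWB : B ⊆ WB := by
    intro b hb
    exact ⟨hBV ⟨b, hb, rfl⟩, self_subset_thickening hδpos C ⟨b, hb, rfl⟩⟩
  obtain ⟨g, hg⟩ := key WA WB hWAopen hWBopen hAWA hBWB
  refine ⟨h * g * h⁻¹ * g, ?_⟩
  rintro _ ⟨x, hx, rfl⟩
  have hx1 : x ∈ WAᶜ := fun hw => hx hw.1
  have h1 : g • x ∈ WB := hg ⟨x, hx1, rfl⟩
  have h2 : h⁻¹ • g • x ∈ O₂ := h1.2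
  have h3 : h⁻¹ • g • x ∈ WAᶜ := fun hw => Set.disjoint_left.mp hδ hw.2 h2
  have h4 : g • (h⁻¹ • g • x) ∈ WB := hg ⟨_, h3, rfl⟩
  have h5 : h • g • h⁻¹ • g • x ∈ V := h4.1
  show (h * g * h⁻¹ * g) • x ∈ V
  rw [mul_smul, mul_smul, mul_smul]
  exact h5

/-- Ping-pong criterion (Malicet–Militon): if a group action on a compact metric space has
uniformly bounded-cardinality "contracting" pairs for every `ε > 0` and has no finite
orbits, then there is a ping-pong pair. -/
theorem ping_pong_pair_criterion {G X : Type*} [Group G] [MetricSpace X] [CompactSpace X]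
    [MulAction G X] (hcont : ∀ g : G, Continuous (fun x : X => g • x))
    (p : ℕ) (hp : 0 < p)
    (hcontract : ∀ ε > (0 : ℝ), ∃ (A B : Set X) (g : G),
      A.Nonempty ∧ B.Nonempty ∧ A.Finite ∧ B.Finite ∧
      A.ncard ≤ p ∧ B.ncard ≤ p ∧
      (fun x => g • x) '' (cthickening ε A)ᶜ ⊆ cthickening ε B)
    (horb : ∀ x : X, (MulAction.orbit G x).Infinite) :
    ∃ (g₁ g₂ : G) (U₁ U₂ V₁ V₂ : Set X),
      IsOpen U₁ ∧ IsOpen U₂ ∧ IsOpen V₁ ∧ IsOpen V₂ ∧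
      Disjoint U₁ U₂ ∧ Disjoint U₁ V₁ ∧ Disjoint U₁ V₂ ∧
      Disjoint U₂ V₁ ∧ Disjoint U₂ V₂ ∧ Disjoint V₁ V₂ ∧
      (fun x => g₁ • x) '' U₁ᶜ ⊆ V₁ ∧ (fun x => g₂ • x) '' U₂ᶜ ⊆ V₂ := by
  classical
  -- Step 1: extract, by a compactness argument, fixed finite sets `A = range a`, `B = range b`
  -- such that for all open neighborhoods `U ⊇ A`, `V ⊇ B` there is `g` with `g • Uᶜ ⊆ V`.
  set R : ℝ → Set ((Fin p → X) × (Fin p → X)) := fun ε =>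
    {q | ∃ g : G, (fun x => g • x) '' (cthickening ε (Set.range q.1))ᶜ
      ⊆ cthickening ε (Set.range q.2)} with hR
  have hRmono : ∀ ε δ : ℝ, ε ≤ δ → R ε ⊆ R δ := by
    rintro ε δ hεδ ⟨a, b⟩ ⟨g, hg⟩
    exact ⟨g, ((Set.image_mono (Set.compl_subset_compl.mpr
      (cthickening_mono hεδ _))).trans hg).trans (cthickening_mono hεδ _)⟩
  have hRne : ∀ ε : ℝ, 0 < ε → (R ε).Nonempty := by
    intro ε hε
    obtain ⟨A, B, g, hAne, hBne, hAfin, hBfin, hAcard, hBcard, hg⟩ := hcontract ε hε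
    obtain ⟨a, ha⟩ := exists_range_eq p A hAfin hAne hAcard
    obtain ⟨b, hb⟩ := exists_range_eq p B hBfin hBne hBcard
    exact ⟨(a, b), g, by simpa [ha, hb] using hg⟩
  set T : ℕ → Set ((Fin p → X) × (Fin p → X)) := fun n => closure (R (1 / (n + 1))) with hT
  have hTpos : ∀ n : ℕ, (0 : ℝ) < 1 / (n + 1) := by intro n; positivity
  have hTne : ∀ n, (T n).Nonempty := fun n => (hRne _ (hTpos n)).mono subset_closure
  have hTdec : ∀ n, T (n + 1) ⊆ T n := by
    intro n
    apply closure_mono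
    apply hRmono
    apply one_div_le_one_div_of_le
    · positivity
    · push_cast; linarith
  obtain ⟨q, hq⟩ : (⋂ n, T n).Nonempty :=
    IsCompact.nonempty_iInter_of_sequence_nonempty_isCompact_isClosed T hTdec hTne
      isClosed_closure.isCompact (fun n => isClosed_closure)
  have key : ∀ U V : Set X, IsOpen U → IsOpen V → Set.range q.1 ⊆ U → Set.range q.2 ⊆ V →
      ∃ g : G, (fun x => g • x) '' Uᶜ ⊆ V := by
    intro U V hU hV hAU hBV
    obtain ⟨δ₁, hδ₁pos, hδ₁⟩ :=
      ((Set.finite_range q.1).isCompact).exists_cthickening_subset_open hU hAU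
    obtain ⟨δ₂, hδ₂pos, hδ₂⟩ :=
      ((Set.finite_range q.2).isCompact).exists_cthickening_subset_open hV hBV
    set δ := min δ₁ δ₂ with hδdef
    have hδpos : 0 < δ := lt_min hδ₁pos hδ₂pos
    obtain ⟨n, hn⟩ := exists_nat_one_div_lt (half_pos hδpos)
    have hqn : q ∈ T n := Set.mem_iInter.mp hq n
    obtain ⟨q', hq'R, hq'dist⟩ := Metric.mem_closure_iff.mp hqn (δ / 2) (half_pos hδpos)
    obtain ⟨g, hg⟩ := hq'R
    have haux : ∀ (f f' : Fin p → X), dist f' f < δ / 2 →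
        cthickening (1 / (n + 1 : ℝ)) (Set.range f') ⊆ cthickening δ (Set.range f) := by
      intro f f' hd
      have hr : Set.range f' ⊆ cthickening (δ / 2) (Set.range f) := by
        rintro _ ⟨i, rfl⟩
        exact mem_cthickening_of_dist_le _ (f i) _ _ ⟨i, rfl⟩
          ((dist_le_pi_dist f' f i).trans hd.le)
      refine (cthickening_subset_of_subset _ hr).trans ?_
      refine (cthickening_cthickening_subset (hTpos n).le (half_pos hδpos).le _).trans ?_
      exact cthickening_mono (by linarith) _
    have hd1 : dist q'.1 q.1 < δ / 2 :=
      lt_of_le_of_lt (le_max_left _ _ : dist q'.1 q.1 ≤ dist q' q)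
        (by rwa [dist_comm] at hq'dist)
    have hd2 : dist q'.2 q.2 < δ / 2 :=
      lt_of_le_of_lt (le_max_right (dist q'.1 q.1) _ : dist q'.2 q.2 ≤ dist q' q)
        (by rwa [dist_comm] at hq'dist)
    have hsub1 : cthickening (1 / (n + 1 : ℝ)) (Set.range q'.1) ⊆ U :=
      (haux q.1 q'.1 hd1).trans ((cthickening_mono (min_le_left _ _) _).trans hδ₁)
    have hsub2 : cthickening (1 / (n + 1 : ℝ)) (Set.range q'.2) ⊆ V :=
      (haux q.2 q'.2 hd2).trans ((cthickening_mono (min_le_right _ _) _).trans hδ₂)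
    exact ⟨g, ((Set.image_mono (Set.compl_subset_compl.mpr hsub1)).trans hg).trans hsub2⟩
  -- Step 2: make the attracting and repelling sets disjoint.
  set A : Set X := Set.range q.1 with hAdef
  set B : Set X := Set.range q.2 with hBdef
  have hAfin : A.Finite := Set.finite_range _
  have hBfin : B.Finite := Set.finite_range _
  obtain ⟨h, hh⟩ := exists_smul_off horb (A ∪ B) (hAfin.union hBfin)
  set B' : Set X := (fun x => h • x) '' B with hB'def
  have hB'fin : B'.Finite := hBfin.image _
  have key2 : ∀ U V : Set X, IsOpen U → IsOpen V → A ⊆ U → B' ⊆ V →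
      ∃ g : G, (fun x => g • x) '' Uᶜ ⊆ V :=
    step_two hcont A B hAfin hBfin h
      (fun x hx hxB => hh x (Or.inl hx) (Or.inr hxB)) key
  have dAB' : Disjoint A B' := by
    rw [Set.disjoint_left]
    rintro x hxA ⟨b, hbB, rfl⟩
    exact hh b (Or.inr hbB) (Or.inl hxA)
  -- Step 3: conjugate to get a second ping-pong element.
  obtain ⟨k, hk⟩ := exists_smul_off horb (A ∪ B') (hAfin.union hB'fin)
  set A₂ : Set X := (fun x => k • x) '' A with hA₂def
  set B₂ : Set X := (fun x => k • x) '' B' with hB₂def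
  have hA₂fin : A₂.Finite := hAfin.image _
  have hB₂fin : B₂.Finite := hB'fin.image _
  have key3 : ∀ U V : Set X, IsOpen U → IsOpen V → A₂ ⊆ U → B₂ ⊆ V →
      ∃ g : G, (fun x => g • x) '' Uᶜ ⊆ V := by
    intro U V hU hV hA2 hB2
    obtain ⟨g, hg⟩ := key2 ((fun x => k • x) ⁻¹' U) ((fun x => k • x) ⁻¹' V)
      (hU.preimage (hcont k)) (hV.preimage (hcont k))
      (fun x hx => hA2 ⟨x, hx, rfl⟩) (fun x hx => hB2 ⟨x, hx, rfl⟩)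
    refine ⟨k * g * k⁻¹, ?_⟩
    rintro _ ⟨x, hx, rfl⟩
    have h1 : k⁻¹ • x ∈ ((fun x => k • x) ⁻¹' U)ᶜ := by
      simp only [Set.mem_compl_iff, Set.mem_preimage, smul_inv_smul]
      exact hx
    have h2 : g • (k⁻¹ • x) ∈ (fun x => k • x) ⁻¹' V := hg ⟨_, h1, rfl⟩
    show (k * g * k⁻¹) • x ∈ V
    rw [mul_smul, mul_smul]
    exact h2
  -- the four sets are pairwise disjoint
  have dA₂B₂ : Disjoint A₂ B₂ := by
    rw [Set.disjoint_left]
    rintro _ ⟨a, haA, rfl⟩ ⟨b, hbB, hba⟩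
    have : b = a := smul_left_cancel k hba
    exact Set.disjoint_left.mp dAB' haA (this ▸ hbB)
  have dAA₂ : Disjoint A A₂ := by
    rw [Set.disjoint_left]
    rintro x hxA ⟨a, haA, rfl⟩
    exact hk a (Or.inl haA) (Or.inl hxA)
  have dAB₂ : Disjoint A B₂ := by
    rw [Set.disjoint_left]
    rintro x hxA ⟨b, hbB, rfl⟩
    exact hk b (Or.inr hbB) (Or.inl hxA)
  have dB'A₂ : Disjoint B' A₂ := by
    rw [Set.disjoint_left]
    rintro x hxB ⟨a, haA, rfl⟩
    exact hk a (Or.inl haA) (Or.inr hxB)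
  have dB'B₂ : Disjoint B' B₂ := by
    rw [Set.disjoint_left]
    rintro x hxB ⟨b, hbB, rfl⟩
    exact hk b (Or.inr hbB) (Or.inr hxB)
  -- separate the four sets by open thickenings
  obtain ⟨δ₁, hδ₁, hd₁⟩ := dAA₂.exists_thickenings hAfin.isCompact hA₂fin.isClosed
  obtain ⟨δ₂, hδ₂, hd₂⟩ := dAB'.exists_thickenings hAfin.isCompact hB'fin.isClosed
  obtain ⟨δ₃, hδ₃, hd₃⟩ := dAB₂.exists_thickenings hAfin.isCompact hB₂fin.isClosed
  obtain ⟨δ₄, hδ₄, hd₄⟩ := dB'A₂.exists_thickenings hB'fin.isCompact hA₂fin.isClosed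
  obtain ⟨δ₅, hδ₅, hd₅⟩ := dA₂B₂.exists_thickenings hA₂fin.isCompact hB₂fin.isClosed
  obtain ⟨δ₆, hδ₆, hd₆⟩ := dB'B₂.exists_thickenings hB'fin.isCompact hB₂fin.isClosed
  set ρ := min δ₁ (min δ₂ (min δ₃ (min δ₄ (min δ₅ δ₆)))) with hρdef
  have hρpos : 0 < ρ := by
    simp only [hρdef, lt_min_iff]
    exact ⟨hδ₁, hδ₂, hδ₃, hδ₄, hδ₅, hδ₆⟩
  have hρ₁ : ρ ≤ δ₁ := min_le_left _ _
  have hρ₂ : ρ ≤ δ₂ := le_trans (min_le_right _ _) (min_le_left _ _)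
  have hρ₃ : ρ ≤ δ₃ :=
    le_trans (min_le_right _ _) (le_trans (min_le_right _ _) (min_le_left _ _))
  have hρ₄ : ρ ≤ δ₄ := le_trans (min_le_right _ _) (le_trans (min_le_right _ _)
    (le_trans (min_le_right _ _) (min_le_left _ _)))
  have hρ₅ : ρ ≤ δ₅ := le_trans (min_le_right _ _) (le_trans (min_le_right _ _)
    (le_trans (min_le_right _ _) (le_trans (min_le_right _ _) (min_le_left _ _))))
  have hρ₆ : ρ ≤ δ₆ := le_trans (min_le_right _ _) (le_trans (min_le_right _ _)
    (le_trans (min_le_right _ _) (le_trans (min_le_right _ _) (min_le_right _ _))))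
  set U₁ := thickening ρ A with hU₁def
  set U₂ := thickening ρ A₂ with hU₂def
  set V₁ := thickening ρ B' with hV₁def
  set V₂ := thickening ρ B₂ with hV₂def
  obtain ⟨g₁, hg₁⟩ := key2 U₁ V₁ isOpen_thickening isOpen_thickening
    (self_subset_thickening hρpos _) (self_subset_thickening hρpos _)
  obtain ⟨g₂, hg₂⟩ := key3 U₂ V₂ isOpen_thickening isOpen_thickening
    (self_subset_thickening hρpos _) (self_subset_thickening hρpos _)
  refine ⟨g₁, g₂, U₁, U₂, V₁, V₂, isOpen_thickening, isOpen_thickening, isOpen_thickening,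
    isOpen_thickening, ?_, ?_, ?_, ?_, ?_, ?_, hg₁, hg₂⟩
  · exact hd₁.mono (thickening_mono hρ₁ _) (thickening_mono hρ₁ _)
  · exact hd₂.mono (thickening_mono hρ₂ _) (thickening_mono hρ₂ _)
  · exact hd₃.mono (thickening_mono hρ₃ _) (thickening_mono hρ₃ _)
  · exact (hd₄.mono (thickening_mono hρ₄ _) (thickening_mono hρ₄ _)).symm
  · exact hd₅.mono (thickening_mono hρ₅ _) (thickening_mono hρ₅ _)
  · exact hd₆.mono (thickening_mono hρ₆ _) (thickening_mono hρ₆ _)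
end

section
/- Let G be a group acting by homeomorphisms on a compact metric space X such that condition (1) of the ping-pong criterion holds: there is p ∈ ℕ such that for every ε > 0 there exist finite sets A, B of cardinality at most p and g ∈ G with g(X \ A^ε) ⊆ B^ε. Then, by compactness, there exists a single contraction pair: nonempty finite sets A, B ⊆ X of cardinality at most p such that for every ε > 0 some g ∈ G satisfies g(X \ A^ε) ⊆ B^ε. -/
open Metric

lemma exists_tuple_of_ncard_le {X : Type*} {S : Set X} (hne : S.Nonempty) (hfin : S.Finite)
    {p : ℕ} (hcard : S.ncard ≤ p) : ∃ f : Fin p → X, Set.range f = S := by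
  obtain ⟨x₀, hx₀⟩ := hne
  classical
  set l : List X := hfin.toFinset.toList with hl
  have hlen : l.length = S.ncard := by
    rw [hl, Finset.length_toList, Set.ncard_eq_toFinset_card S hfin]
  have hmem : ∀ x, x ∈ l ↔ x ∈ S := by
    intro x
    rw [hl, Finset.mem_toList, Set.Finite.mem_toFinset]
  refine ⟨fun i => l.getD i x₀, ?_⟩
  ext y
  constructor
  · rintro ⟨i, rfl⟩
    show l.getD (i : ℕ) x₀ ∈ S
    by_cases h : (i : ℕ) < l.length
    · rw [List.getD_eq_getElem l x₀ h]
      exact (hmem _).1 (l.getElem_mem h)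
    · rw [List.getD_eq_default l x₀ (not_lt.1 h)]
      exact hx₀
  · intro hy
    obtain ⟨i, hi, hgi⟩ := List.getElem_of_mem ((hmem y).2 hy)
    have hip : i < p := lt_of_lt_of_le (hlen ▸ hi) hcard
    refine ⟨⟨i, hip⟩, ?_⟩
    show l.getD i x₀ = y
    rw [List.getD_eq_getElem l x₀ hi, hgi]

/-- Extraction of a contraction pair: if for every `ε > 0` there are finite sets of
cardinality at most `p` witnessing `ε`-contraction, then by compactness a single pair
`(A, B)` works for all `ε > 0` simultaneously. -/
theorem exists_contraction_pair {G X : Type*} [Group G] [MetricSpace X] [CompactSpace X]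
    [MulAction G X] (hcont : ∀ g : G, Continuous (fun x : X => g • x))
    (p : ℕ) (hp : 0 < p)
    (hcontract : ∀ ε > (0 : ℝ), ∃ (A B : Set X) (g : G),
      A.Nonempty ∧ B.Nonempty ∧ A.Finite ∧ B.Finite ∧
      A.ncard ≤ p ∧ B.ncard ≤ p ∧
      (fun x => g • x) '' (cthickening ε A)ᶜ ⊆ cthickening ε B) :
    ∃ A B : Set X, A.Nonempty ∧ B.Nonempty ∧ A.Finite ∧ B.Finite ∧
      A.ncard ≤ p ∧ B.ncard ≤ p ∧
      ∀ ε > (0 : ℝ), ∃ g : G,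
        (fun x => g • x) '' (cthickening ε A)ᶜ ⊆ cthickening ε B := by
  haveI : Nonempty (Fin p) := ⟨⟨0, hp⟩⟩
  -- Step 1: for each `n`, choose tuples witnessing contraction at scale `1/(n+1)`.
  have H : ∀ n : ℕ, ∃ ab : (Fin p → X) × (Fin p → X), ∃ g : G,
      (fun x => g • x) '' (cthickening (1 / (n + 1 : ℝ)) (Set.range ab.1))ᶜ ⊆
        cthickening (1 / (n + 1 : ℝ)) (Set.range ab.2) := by
    intro n
    have hεpos : (0 : ℝ) < 1 / (n + 1 : ℝ) := by positivity
    obtain ⟨A, B, g, hAne, hBne, hAfin, hBfin, hAcard, hBcard, hsub⟩ :=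
      hcontract (1 / (n + 1 : ℝ)) hεpos
    obtain ⟨a, ha⟩ := exists_tuple_of_ncard_le hAne hAfin hAcard
    obtain ⟨b, hb⟩ := exists_tuple_of_ncard_le hBne hBfin hBcard
    exact ⟨(a, b), g, by simpa [ha, hb] using hsub⟩
  choose u g hg using H
  -- Step 2: extract a convergent subsequence of the tuples.
  obtain ⟨c, -, φ, hφ, hconv⟩ :=
    isCompact_univ.tendsto_subseq (x := u) (fun n => Set.mem_univ _)
  refine ⟨Set.range c.1, Set.range c.2, Set.range_nonempty _, Set.range_nonempty _,
    Set.finite_range _, Set.finite_range _, ?_, ?_, ?_⟩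
  · calc (Set.range c.1).ncard = (c.1 '' Set.univ).ncard := by rw [Set.image_univ]
      _ ≤ (Set.univ : Set (Fin p)).ncard := Set.ncard_image_le Set.finite_univ
      _ = p := by simp [Set.ncard_univ]
  · calc (Set.range c.2).ncard = (c.2 '' Set.univ).ncard := by rw [Set.image_univ]
      _ ≤ (Set.univ : Set (Fin p)).ncard := Set.ncard_image_le Set.finite_univ
      _ = p := by simp [Set.ncard_univ]
  -- Step 3: for each `ε > 0`, find a good index in the subsequence.
  intro ε hε
  have hε2 : (0 : ℝ) < ε / 2 := by linarith
  obtain ⟨N, hN⟩ := Metric.tendsto_atTop.mp hconv (ε / 2) hε2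
  obtain ⟨N', hN'⟩ := exists_nat_one_div_lt (K := ℝ) hε2
  set k := max N N'
  set n := φ k with hn
  set δ : ℝ := 1 / (n + 1 : ℝ) with hδdef
  have hδpos : (0 : ℝ) < δ := by positivity
  have hδlt : δ < ε / 2 := by
    have h1 : (N' : ℝ) ≤ (n : ℝ) := by
      exact_mod_cast le_trans (le_trans (le_max_right N N') (hφ.id_le k)) (le_refl n)
    calc δ ≤ 1 / (N' + 1 : ℝ) := by
          apply one_div_le_one_div_of_le (by positivity)
          linarith
      _ < ε / 2 := hN'
  have hdist : dist (u n) c < ε / 2 := hN k (le_max_left N N')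
  have hdmax : dist (u n) c = max (dist (u n).1 c.1) (dist (u n).2 c.2) := Prod.dist_eq
  have hdist1 : ∀ i, dist ((u n).1 i) (c.1 i) ≤ ε / 2 := fun i =>
    le_trans (le_trans (dist_le_pi_dist _ _ i)
      (le_trans (le_max_left _ _) hdmax.ge)) hdist.le
  have hdist2 : ∀ i, dist ((u n).2 i) (c.2 i) ≤ ε / 2 := fun i =>
    le_trans (le_trans (dist_le_pi_dist _ _ i)
      (le_trans (le_max_right _ _) hdmax.ge)) hdist.le
  -- key inclusions
  have hrange1 : Set.range (u n).1 ⊆ cthickening (ε / 2) (Set.range c.1) := by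
    rintro y ⟨i, rfl⟩
    exact mem_cthickening_of_dist_le _ _ _ _ ⟨i, rfl⟩ (hdist1 i)
  have hrange2 : Set.range (u n).2 ⊆ cthickening (ε / 2) (Set.range c.2) := by
    rintro y ⟨i, rfl⟩
    exact mem_cthickening_of_dist_le _ _ _ _ ⟨i, rfl⟩ (hdist2 i)
  have hA : cthickening δ (Set.range (u n).1) ⊆ cthickening ε (Set.range c.1) :=
    calc cthickening δ (Set.range (u n).1)
        ⊆ cthickening δ (cthickening (ε / 2) (Set.range c.1)) :=
          cthickening_subset_of_subset δ hrange1
      _ ⊆ cthickening (δ + ε / 2) (Set.range c.1) :=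
          cthickening_cthickening_subset hδpos.le (by linarith) _
      _ ⊆ cthickening ε (Set.range c.1) := cthickening_mono (by linarith) _
  have hB : cthickening δ (Set.range (u n).2) ⊆ cthickening ε (Set.range c.2) :=
    calc cthickening δ (Set.range (u n).2)
        ⊆ cthickening δ (cthickening (ε / 2) (Set.range c.2)) :=
          cthickening_subset_of_subset δ hrange2
      _ ⊆ cthickening (δ + ε / 2) (Set.range c.2) :=
          cthickening_cthickening_subset hδpos.le (by linarith) _
      _ ⊆ cthickening ε (Set.range c.2) := cthickening_mono (by linarith) _
  refine ⟨g n, ?_⟩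
  rintro x ⟨y, hy, rfl⟩
  have hy' : y ∈ (cthickening δ (Set.range (u n).1))ᶜ := fun h => hy (hA h)
  exact hB (hg n ⟨y, hy', rfl⟩)
end
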